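/- For every n ≥ 3, the cycle C_n on n vertices satisfies ρ_T(C_n) ≤ 3. Moreover, there exists a graph G with ρ_T(G) ≠ ρ_T̂(G): the path P_6 on 6 vertices satisfies ρ_T(P_6) = 2 while ρ_T̂(P_6) = 3. -/
import Mathlib


/-- A min-plus `k`-tropical dot product representation of `G` with threshold `t`:
distinct vertices `x, y` are adjacent iff `min_{1 ≤ i ≤ k} (f(x)_i + f(y)_i) ≥ t`
(equivalently, every coordinate sum is at least `t`). -/
def MinPlusRep {V : Type*} (G : SimpleGraph V) (k : ℕ) (f : V → Fin k → ℝ) (t : ℝ) : Prop :=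
  0 < t ∧ ∀ x y : V, x ≠ y → (G.Adj x y ↔ ∀ i : Fin k, t ≤ f x i + f y i)

/-- The min-plus tropical dot product dimension `ρ_T(G)`. -/
noncomputable def rhoT {V : Type*} (G : SimpleGraph V) : ℕ :=
  sInf {k : ℕ | 0 < k ∧ ∃ (f : V → Fin k → ℝ) (t : ℝ), MinPlusRep G k f t}

/-- A max-plus `k`-tropical dot product representation of `G` with threshold `t`:
distinct vertices `x, y` are adjacent iff `max_{1 ≤ i ≤ k} (f(x)_i + f(y)_i) ≥ t`
(equivalently, some coordinate sum is at least `t`). -/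
def MaxPlusRep {V : Type*} (G : SimpleGraph V) (k : ℕ) (f : V → Fin k → ℝ) (t : ℝ) : Prop :=
  0 < t ∧ ∀ x y : V, x ≠ y → (G.Adj x y ↔ ∃ i : Fin k, t ≤ f x i + f y i)

/-- The max-plus tropical dot product dimension `ρ_T̂(G)`. -/
noncomputable def rhoTHat {V : Type*} (G : SimpleGraph V) : ℕ :=
  sInf {k : ℕ | 0 < k ∧ ∃ (f : V → Fin k → ℝ) (t : ℝ), MaxPlusRep G k f t}


def cw1 (n a : ℕ) : ℕ := if a = 0 then 0 else if a % 2 = 0 then n - a/2 else (a-1)/2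
def cw2 (n a : ℕ) : ℕ := if a = 0 then 0 else if a % 2 = 1 then n - (a-1)/2 else a/2
def cw3 (n a : ℕ) : ℕ := if a = 0 then n else if a = 1 ∨ a = n-1 then 0 else 1

lemma cycle_key {n a b : ℕ} (hn : 3 ≤ n) (hb : b < n) (hab : a < b) :
    (b = a + 1 ∨ (a = 0 ∧ b = n - 1)) ↔
      (cw1 n a + cw1 n b ≤ n ∧ cw2 n a + cw2 n b ≤ n + 1 ∧ cw3 n a + cw3 n b ≤ n) := by
  unfold cw1 cw2 cw3
  split_ifs <;> omega

lemma fin_sub_val {n : ℕ} (u v : Fin n) :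
    (u - v).val = if v.val ≤ u.val then u.val - v.val else u.val + n - v.val := by
  have hu := u.isLt; have hv := v.isLt
  have h : (u - v).val = (n - v.val + u.val) % n := by rw [Fin.sub_def]
  split_ifs with hle
  · have h1 : n - v.val + u.val = (u.val - v.val) + n := by omega
    rw [h, h1, Nat.add_mod_right, Nat.mod_eq_of_lt (by omega)]
  · rw [h, Nat.mod_eq_of_lt (by omega)]; omega

lemma cycle_adj_iff {n : ℕ} (hn : 3 ≤ n) {u v : Fin n} (h : u.val < v.val) :
    (SimpleGraph.cycleGraph n).Adj u v ↔ (v.val = u.val + 1 ∨ (u.val = 0 ∧ v.val = n - 1)) := by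
  rw [SimpleGraph.cycleGraph_adj']
  have hv := v.isLt
  rw [fin_sub_val u v, fin_sub_val v u]
  split_ifs <;> omega

lemma real_red (s A B : ℕ) :
    ((1:ℝ) ≤ (((s:ℝ)+1)/2 - (A:ℕ)) + (((s:ℝ)+1)/2 - (B:ℕ))) ↔ A + B ≤ s := by
  rw [← Nat.cast_le (α := ℝ)]
  push_cast
  constructor <;> intro <;> linarith


noncomputable def cfun (n : ℕ) : Fin n → Fin 3 → ℝ := fun x =>
  ![(((n:ℕ):ℝ)+1)/2 - (cw1 n x.val : ℕ), (((n+1:ℕ):ℝ)+1)/2 - (cw2 n x.val : ℕ),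
    (((n:ℕ):ℝ)+1)/2 - (cw3 n x.val : ℕ)]

lemma cycle_rep {n : ℕ} (hn : 3 ≤ n) :
    MinPlusRep (SimpleGraph.cycleGraph n) 3 (cfun n) 1 := by
  refine ⟨one_pos, ?_⟩
  have main : ∀ u v : Fin n, u.val < v.val →
      ((SimpleGraph.cycleGraph n).Adj u v ↔ ∀ i : Fin 3, (1:ℝ) ≤ cfun n u i + cfun n v i) := by
    intro u v huv
    rw [cycle_adj_iff hn huv, cycle_key hn v.isLt huv]
    constructor
    · rintro ⟨h1, h2, h3⟩ i
      fin_cases i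
      · exact (real_red n _ _).mpr h1
      · exact (real_red (n+1) _ _).mpr h2
      · exact (real_red n _ _).mpr h3
    · exact fun h => ⟨(real_red n _ _).mp (h 0), (real_red (n+1) _ _).mp (h 1),
        (real_red n _ _).mp (h 2)⟩
  intro x y hxy
  rcases lt_trichotomy x.val y.val with h | h | h
  · exact main x y h
  · exact absurd (Fin.ext h) hxy
  · rw [SimpleGraph.adj_comm, main y x h]
    exact forall_congr' fun i => by rw [add_comm]



def pf (x : Fin 6) (i : Fin 2) : ℝ :=
  if i.val = 0 then
    (if x.val = 0 then -2 else if x.val = 1 then 3 else if x.val = 2 then -1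
     else if x.val = 3 then 2 else if x.val = 4 then 0 else 1)
  else
    (if x.val = 0 then 3 else if x.val = 1 then -2 else if x.val = 2 then 3
     else if x.val = 3 then -1 else if x.val = 4 then 2 else 0)

lemma pf_rep : MinPlusRep (SimpleGraph.pathGraph 6) 2 pf 1 := by
  refine ⟨one_pos, ?_⟩
  intro x y hxy
  have hxy' : x.val ≠ y.val := fun h => hxy (Fin.ext h)
  rw [SimpleGraph.pathGraph_adj, Fin.forall_fin_two]
  fin_cases x <;> fin_cases y <;> simp_all [pf] <;> norm_num

def qf (x : Fin 6) (i : Fin 3) : ℝ :=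
  if i.val = 0 then
    (if x.val = 0 then 0 else if x.val = 1 then 1 else if x.val = 2 then 0 else -9)
  else if i.val = 1 then
    (if x.val = 2 then 0 else if x.val = 3 then 1 else if x.val = 4 then 0 else -9)
  else
    (if x.val = 4 then 1 else if x.val = 5 then 1 else -9)

lemma exists_fin3 (P : Fin 3 → Prop) : (∃ i, P i) ↔ P 0 ∨ P 1 ∨ P 2 := by
  constructor
  · rintro ⟨i, hi⟩
    fin_cases i
    · exact Or.inl hi
    · exact Or.inr (Or.inl hi)
    · exact Or.inr (Or.inr hi)
  · rintro (h | h | h) <;> exact ⟨_, h⟩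

lemma qf_rep : MaxPlusRep (SimpleGraph.pathGraph 6) 3 qf 1 := by
  refine ⟨one_pos, ?_⟩
  intro x y hxy
  have hxy' : x.val ≠ y.val := fun h => hxy (Fin.ext h)
  rw [SimpleGraph.pathGraph_adj, exists_fin3]
  fin_cases x <;> fin_cases y <;> simp_all [qf] <;> norm_num

lemma path_adj_val {u v : Fin 6} :
    (SimpleGraph.pathGraph 6).Adj u v ↔ u.val + 1 = v.val ∨ v.val + 1 = u.val :=
  SimpleGraph.pathGraph_adj

lemma no_one_min (f : Fin 6 → Fin 1 → ℝ) (t : ℝ)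
    (h : MinPlusRep (SimpleGraph.pathGraph 6) 1 f t) : False := by
  obtain ⟨ht, hrep⟩ := h
  have h01 : t ≤ f 0 0 + f 1 0 :=
    ((hrep 0 1 (by decide)).mp (path_adj_val.mpr (by decide))) 0
  have h34 : t ≤ f 3 0 + f 4 0 :=
    ((hrep 3 4 (by decide)).mp (path_adj_val.mpr (by decide))) 0
  have h03 : ¬ t ≤ f 0 0 + f 3 0 := fun hc =>
    (by decide : ¬((0:Fin 6).val + 1 = (3:Fin 6).val ∨ (3:Fin 6).val + 1 = (0:Fin 6).val))
      (path_adj_val.mp ((hrep 0 3 (by decide)).mpr (fun i => by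
        have : i = 0 := Subsingleton.elim _ _
        rw [this]; exact hc)))
  have h14 : ¬ t ≤ f 1 0 + f 4 0 := fun hc =>
    (by decide : ¬((1:Fin 6).val + 1 = (4:Fin 6).val ∨ (4:Fin 6).val + 1 = (1:Fin 6).val))
      (path_adj_val.mp ((hrep 1 4 (by decide)).mpr (fun i => by
        have : i = 0 := Subsingleton.elim _ _
        rw [this]; exact hc)))
  push_neg at h03 h14
  linarith

lemma no_small_max {k : ℕ} (hk : k ≤ 2) (f : Fin 6 → Fin k → ℝ) (t : ℝ)
    (h : MaxPlusRep (SimpleGraph.pathGraph 6) k f t) : False := by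
  obtain ⟨ht, hrep⟩ := h
  obtain ⟨i1, h1⟩ := (hrep 0 1 (by decide)).mp (path_adj_val.mpr (by decide))
  obtain ⟨i2, h2⟩ := (hrep 2 3 (by decide)).mp (path_adj_val.mpr (by decide))
  obtain ⟨i3, h3⟩ := (hrep 4 5 (by decide)).mp (path_adj_val.mpr (by decide))
  have step : ∀ (a b c d : Fin 6) (i : Fin k), a ≠ c → b ≠ d →
      ¬(SimpleGraph.pathGraph 6).Adj a c → ¬(SimpleGraph.pathGraph 6).Adj b d →
      t ≤ f a i + f b i → t ≤ f c i + f d i → False := by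
    intro a b c d i hac hbd hnac hnbd ha hb
    have : t ≤ f a i + f c i ∨ t ≤ f b i + f d i := by
      by_contra hc; push_neg at hc; obtain ⟨u, v⟩ := hc; linarith
    rcases this with hx | hx
    · exact hnac ((hrep a c hac).mpr ⟨i, hx⟩)
    · exact hnbd ((hrep b d hbd).mpr ⟨i, hx⟩)
  have nadj : ∀ u v : Fin 6, ¬(u.val + 1 = v.val ∨ v.val + 1 = u.val) →
      ¬(SimpleGraph.pathGraph 6).Adj u v := fun u v h hc => h (path_adj_val.mp hc)
  have htwo : i1 = i2 ∨ i1 = i3 ∨ i2 = i3 := by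
    have e1 := i1.isLt; have e2 := i2.isLt; have e3 := i3.isLt
    by_contra hc
    push_neg at hc
    obtain ⟨a, b, c⟩ := hc
    have a' : i1.val ≠ i2.val := fun h => a (Fin.ext h)
    have b' : i1.val ≠ i3.val := fun h => b (Fin.ext h)
    have c' : i2.val ≠ i3.val := fun h => c (Fin.ext h)
    omega
  rcases htwo with heq | heq | heq
  · exact step 0 1 2 3 i1 (by decide) (by decide) (nadj _ _ (by decide)) (nadj _ _ (by decide))
      h1 (heq ▸ h2)
  · exact step 0 1 4 5 i1 (by decide) (by decide) (nadj _ _ (by decide)) (nadj _ _ (by decide))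
      h1 (heq ▸ h3)
  · exact step 2 3 4 5 i2 (by decide) (by decide) (nadj _ _ (by decide)) (nadj _ _ (by decide))
      h2 (heq ▸ h3)

/-- For every `n ≥ 3`, `ρ_T(C_n) ≤ 3`; moreover `ρ_T` and `ρ_T̂` can differ:
`ρ_T(P_6) = 2` while `ρ_T̂(P_6) = 3`. -/
theorem stmt_19 :
    (∀ n : ℕ, 3 ≤ n → rhoT (SimpleGraph.cycleGraph n) ≤ 3) ∧
      rhoT (SimpleGraph.pathGraph 6) = 2 ∧ rhoTHat (SimpleGraph.pathGraph 6) = 3 := by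
  refine ⟨?_, ?_, ?_⟩
  · intro n hn
    exact Nat.sInf_le ⟨by norm_num, cfun n, 1, cycle_rep hn⟩
  · apply le_antisymm
    · exact Nat.sInf_le ⟨by norm_num, pf, 1, pf_rep⟩
    · refine le_csInf ⟨2, ⟨by norm_num, pf, 1, pf_rep⟩⟩ ?_
      rintro m ⟨hm, f, t, hrep⟩
      rcases Nat.lt_or_ge m 2 with h | h
      · interval_cases m
        · exact absurd (no_one_min f t hrep) not_false
      · exact h
  · apply le_antisymm
    · exact Nat.sInf_le ⟨by norm_num, qf, 1, qf_rep⟩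
    · refine le_csInf ⟨3, ⟨by norm_num, qf, 1, qf_rep⟩⟩ ?_
      rintro m ⟨hm, f, t, hrep⟩
      rcases Nat.lt_or_ge m 3 with h | h
      · exact absurd (no_small_max (by omega) f t hrep) not_false
      · exact h
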